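/- For complex q with |q| < 1, the Jacobi theta null values satisfy θ₃(q)⁴ = θ₄(q)⁴ + θ₂(q)⁴. -/

import Mathlib

open Complex

/-- Jacobi theta null θ₃(q) = ∑_{n ∈ ℤ} q^{n²}. -/
noncomputable def theta3 (q : ℂ) : ℂ := ∑' n : ℤ, q ^ (n ^ 2)

/-- Jacobi theta null θ₄(q) = ∑_{n ∈ ℤ} (-1)ⁿ q^{n²}. -/
noncomputable def theta4 (q : ℂ) : ℂ := ∑' n : ℤ, (-1 : ℂ) ^ n * q ^ (n ^ 2)

/-- Jacobi theta null θ₂(q) = ∑_{n ∈ ℤ} q^{(n+1/2)²} (principal branch powers). -/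
noncomputable def theta2 (q : ℂ) : ℂ := ∑' n : ℤ, q ^ ((((n : ℂ) + 1 / 2) ^ 2) : ℂ)

namespace JacobiAux

/-- the auxiliary series ψ(q) = ∑_{n∈ℤ} q^{n²+n}. -/
noncomputable def psi (q : ℂ) : ℂ := ∑' n : ℤ, q ^ (n ^ 2 + n)

/-- geometric-type summability over ℤ. -/
lemma summable_natAbs {r : ℝ} (h0 : 0 ≤ r) (h1 : r < 1) :
    Summable fun n : ℤ => r ^ n.natAbs := by
  apply Summable.of_nat_of_neg
  · simpa using summable_geometric_of_lt_one h0 h1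
  · simpa using summable_geometric_of_lt_one h0 h1

/-- summability of norms of `q ^ g n` for exponents growing at least linearly. -/
lemma summable_norm_zpow {q : ℂ} (hq0 : q ≠ 0) (hq : ‖q‖ < 1) (g : ℤ → ℤ)
    (hg : ∀ n : ℤ, (n.natAbs : ℤ) ≤ g n + 2) :
    Summable fun n : ℤ => ‖q ^ g n‖ := by
  have h0 : (0:ℝ) < ‖q‖ := norm_pos_iff.mpr hq0
  have hb : Summable fun n : ℤ => ‖q‖ ^ (-2 : ℤ) * ‖q‖ ^ n.natAbs :=
    (summable_natAbs h0.le hq).mul_left _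
  refine hb.of_nonneg_of_le (fun n => by positivity) (fun n => ?_)
  have h2 : ‖q‖ ^ g n ≤ ‖q‖ ^ ((n.natAbs : ℤ) - 2) :=
    zpow_le_zpow_right_of_le_one₀ h0 hq.le (by have := hg n; omega)
  have h3 : ‖q‖ ^ ((n.natAbs : ℤ) - 2) = ‖q‖ ^ (-2 : ℤ) * ‖q‖ ^ n.natAbs := by
    rw [sub_eq_add_neg, add_comm, zpow_add₀ (ne_of_gt h0), zpow_natCast]
  rw [norm_zpow]
  rw [h3] at h2
  exact h2

lemma hg_sq : ∀ n : ℤ, (n.natAbs : ℤ) ≤ n ^ 2 + 2 := by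
  intro n
  have h : (n.natAbs : ℤ) = n ∨ (n.natAbs : ℤ) = -n := by omega
  rcases h with h | h <;> rw [h] <;> nlinarith [sq_nonneg (n - 1), sq_nonneg (n + 1)]

lemma hg_sq_add : ∀ n : ℤ, (n.natAbs : ℤ) ≤ (n ^ 2 + n) + 2 := by
  intro n
  have h : (n.natAbs : ℤ) = n ∨ (n.natAbs : ℤ) = -n := by omega
  rcases h with h | h <;> rw [h] <;> nlinarith [sq_nonneg n, sq_nonneg (n + 1)]

section Main

variable {q : ℂ}

lemma sum_norm3 (hq0 : q ≠ 0) (hq : ‖q‖ < 1) : Summable fun n : ℤ => ‖q ^ (n ^ 2)‖ :=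
  summable_norm_zpow hq0 hq _ hg_sq

lemma sum_normP (hq0 : q ≠ 0) (hq : ‖q‖ < 1) : Summable fun n : ℤ => ‖q ^ (n ^ 2 + n)‖ :=
  summable_norm_zpow hq0 hq _ hg_sq_add

lemma sum_norm4 (hq0 : q ≠ 0) (hq : ‖q‖ < 1) :
    Summable fun n : ℤ => ‖(-1 : ℂ) ^ n * q ^ (n ^ 2)‖ := by
  refine (sum_norm3 hq0 hq).congr fun n => ?_
  simp [norm_mul, norm_zpow]

/-- The even/odd splitting equivalences. -/
def evenEquiv : ℤ × ℤ ≃ {p : ℤ × ℤ // (p.1 + p.2) % 2 = 0} where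
  toFun ab := ⟨(ab.1 + ab.2, ab.1 - ab.2), by simp; omega⟩
  invFun p := ((p.1.1 + p.1.2) / 2, (p.1.1 - p.1.2) / 2)
  left_inv ab := by
    ext <;> simp <;> omega
  right_inv p := by
    have h := p.2
    ext <;> simp <;> omega

def oddEquiv : ℤ × ℤ ≃ {p : ℤ × ℤ // ¬ (p.1 + p.2) % 2 = 0} where
  toFun ab := ⟨(ab.1 + ab.2 + 1, ab.1 - ab.2), by simp; omega⟩
  invFun p := ((p.1.1 + p.1.2 - 1) / 2, (p.1.1 - p.1.2 - 1) / 2)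
  left_inv ab := by
    ext <;> simp <;> omega
  right_inv p := by
    have h := p.2
    ext <;> simp <;> omega

/-- Splitting a double sum over ℤ×ℤ by parity of the sum of coordinates. -/
lemma split_sum (f : ℤ × ℤ → ℂ) (hf : Summable f) :
    ∑' p : ℤ × ℤ, f p
      = (∑' p : ℤ × ℤ, f (p.1 + p.2, p.1 - p.2))
        + ∑' p : ℤ × ℤ, f (p.1 + p.2 + 1, p.1 - p.2) := by
  classical
  have h := Summable.tsum_subtype_add_tsum_subtype_compl hf {p : ℤ × ℤ | (p.1 + p.2) % 2 = 0}
  rw [← h]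
  congr 1
  · exact (evenEquiv.tsum_eq (fun x : {p : ℤ × ℤ // (p.1 + p.2) % 2 = 0} => f ↑x)).symm
  · exact (oddEquiv.tsum_eq
      (fun x : {p : ℤ × ℤ // ¬ (p.1 + p.2) % 2 = 0} => f ↑x)).symm

/-- exponent-splitting helper -/
lemma expand (hq0 : q ≠ 0) (e j k l : ℤ) (h : e = j + 2 * k + 2 * l) :
    q ^ e = q ^ j * ((q ^ 2) ^ k * (q ^ 2) ^ l) := by
  subst h
  rw [zpow_add₀ hq0, zpow_add₀ hq0, zpow_mul, zpow_mul, zpow_two, pow_two, mul_assoc]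

lemma q2_ne (hq0 : q ≠ 0) : q ^ 2 ≠ 0 := pow_ne_zero _ hq0

lemma q2_norm (hq : ‖q‖ < 1) : ‖q ^ 2‖ < 1 := by
  rw [norm_pow]
  nlinarith [norm_nonneg q]

/-- Identity (A): θ₃(q)² = θ₃(q²)² + q·ψ(q²)². -/
lemma identA (hq0 : q ≠ 0) (hq : ‖q‖ < 1) :
    theta3 q * theta3 q
      = theta3 (q ^ 2) * theta3 (q ^ 2) + q * (psi (q ^ 2) * psi (q ^ 2)) := by
  have h3 := sum_norm3 hq0 hq
  have h3' := sum_norm3 (q2_ne hq0) (q2_norm hq)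
  have hP' := sum_normP (q2_ne hq0) (q2_norm hq)
  have e0 : theta3 q * theta3 q = ∑' z : ℤ × ℤ, q ^ (z.1 ^ 2) * q ^ (z.2 ^ 2) := by
    rw [theta3]; exact tsum_mul_tsum_of_summable_norm h3 h3
  have e1 : theta3 (q ^ 2) * theta3 (q ^ 2)
      = ∑' z : ℤ × ℤ, (q ^ 2) ^ (z.1 ^ 2) * (q ^ 2) ^ (z.2 ^ 2) := by
    rw [theta3]; exact tsum_mul_tsum_of_summable_norm h3' h3'
  have e2 : psi (q ^ 2) * psi (q ^ 2)
      = ∑' z : ℤ × ℤ, (q ^ 2) ^ (z.1 ^ 2 + z.1) * (q ^ 2) ^ (z.2 ^ 2 + z.2) := by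
    rw [psi]; exact tsum_mul_tsum_of_summable_norm hP' hP'
  rw [e0, split_sum _ ((h3.mul_norm h3).of_norm)]
  congr 1
  · rw [e1]
    apply tsum_congr
    intro p
    rw [← zpow_add₀ hq0, expand hq0 _ 0 (p.1 ^ 2) (p.2 ^ 2) (by ring), zpow_zero, one_mul]
  · rw [e2, ← tsum_mul_left]
    apply tsum_congr
    intro p
    rw [← zpow_add₀ hq0, expand hq0 _ 1 (p.1 ^ 2 + p.1) (p.2 ^ 2 + p.2) (by ring), zpow_one]

/-- Identity (B): θ₄(q)² = θ₃(q²)² − q·ψ(q²)². -/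
lemma identB (hq0 : q ≠ 0) (hq : ‖q‖ < 1) :
    theta4 q * theta4 q
      = theta3 (q ^ 2) * theta3 (q ^ 2) - q * (psi (q ^ 2) * psi (q ^ 2)) := by
  have h4 := sum_norm4 hq0 hq
  have h3' := sum_norm3 (q2_ne hq0) (q2_norm hq)
  have hP' := sum_normP (q2_ne hq0) (q2_norm hq)
  have hm1 : (-1 : ℂ) ≠ 0 := by norm_num
  have e0 : theta4 q * theta4 q = ∑' z : ℤ × ℤ,
      ((-1 : ℂ) ^ z.1 * q ^ (z.1 ^ 2)) * ((-1 : ℂ) ^ z.2 * q ^ (z.2 ^ 2)) := by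
    rw [theta4]; exact tsum_mul_tsum_of_summable_norm h4 h4
  have e1 : theta3 (q ^ 2) * theta3 (q ^ 2)
      = ∑' z : ℤ × ℤ, (q ^ 2) ^ (z.1 ^ 2) * (q ^ 2) ^ (z.2 ^ 2) := by
    rw [theta3]; exact tsum_mul_tsum_of_summable_norm h3' h3'
  have e2 : psi (q ^ 2) * psi (q ^ 2)
      = ∑' z : ℤ × ℤ, (q ^ 2) ^ (z.1 ^ 2 + z.1) * (q ^ 2) ^ (z.2 ^ 2 + z.2) := by
    rw [psi]; exact tsum_mul_tsum_of_summable_norm hP' hP'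
  rw [e0, split_sum _ ((h4.mul_norm h4).of_norm), sub_eq_add_neg]
  congr 1
  · rw [e1]
    apply tsum_congr
    intro p
    have hsign : (-1 : ℂ) ^ (p.1 + p.2) * (-1 : ℂ) ^ (p.1 - p.2) = 1 := by
      rw [← zpow_add₀ hm1]
      have h : p.1 + p.2 + (p.1 - p.2) = 2 * p.1 := by ring
      rw [h, zpow_mul]
      norm_num
    calc ((-1 : ℂ) ^ (p.1 + p.2) * q ^ ((p.1 + p.2) ^ 2))
        * ((-1 : ℂ) ^ (p.1 - p.2) * q ^ ((p.1 - p.2) ^ 2))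
        = ((-1 : ℂ) ^ (p.1 + p.2) * (-1 : ℂ) ^ (p.1 - p.2))
          * (q ^ ((p.1 + p.2) ^ 2) * q ^ ((p.1 - p.2) ^ 2)) := by ring
      _ = q ^ ((p.1 + p.2) ^ 2) * q ^ ((p.1 - p.2) ^ 2) := by rw [hsign, one_mul]
      _ = (q ^ 2) ^ (p.1 ^ 2) * (q ^ 2) ^ (p.2 ^ 2) := by
          rw [← zpow_add₀ hq0, expand hq0 _ 0 (p.1 ^ 2) (p.2 ^ 2) (by ring),
            zpow_zero, one_mul]
  · rw [e2, ← tsum_mul_left, ← tsum_neg]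
    apply tsum_congr
    intro p
    have hsign : (-1 : ℂ) ^ (p.1 + p.2 + 1) * (-1 : ℂ) ^ (p.1 - p.2) = -1 := by
      rw [← zpow_add₀ hm1]
      have h : p.1 + p.2 + 1 + (p.1 - p.2) = 2 * p.1 + 1 := by ring
      rw [h, zpow_add₀ hm1, zpow_mul]
      norm_num
    calc ((-1 : ℂ) ^ (p.1 + p.2 + 1) * q ^ ((p.1 + p.2 + 1) ^ 2))
        * ((-1 : ℂ) ^ (p.1 - p.2) * q ^ ((p.1 - p.2) ^ 2))
        = ((-1 : ℂ) ^ (p.1 + p.2 + 1) * (-1 : ℂ) ^ (p.1 - p.2))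
          * (q ^ ((p.1 + p.2 + 1) ^ 2) * q ^ ((p.1 - p.2) ^ 2)) := by ring
      _ = -(q ^ ((p.1 + p.2 + 1) ^ 2) * q ^ ((p.1 - p.2) ^ 2)) := by
          rw [hsign]; ring
      _ = -(q * ((q ^ 2) ^ (p.1 ^ 2 + p.1) * (q ^ 2) ^ (p.2 ^ 2 + p.2))) := by
          rw [← zpow_add₀ hq0,
            expand hq0 _ 1 (p.1 ^ 2 + p.1) (p.2 ^ 2 + p.2) (by ring), zpow_one]

/-- Identity (C): ψ(q)² = 2·ψ(q²)·θ₃(q²). -/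
lemma identC (hq0 : q ≠ 0) (hq : ‖q‖ < 1) :
    psi q * psi q = 2 * (psi (q ^ 2) * theta3 (q ^ 2)) := by
  have hP := sum_normP hq0 hq
  have h3' := sum_norm3 (q2_ne hq0) (q2_norm hq)
  have hP' := sum_normP (q2_ne hq0) (q2_norm hq)
  have e0 : psi q * psi q = ∑' z : ℤ × ℤ, q ^ (z.1 ^ 2 + z.1) * q ^ (z.2 ^ 2 + z.2) := by
    rw [psi]; exact tsum_mul_tsum_of_summable_norm hP hP
  have e1 : psi (q ^ 2) * theta3 (q ^ 2)
      = ∑' z : ℤ × ℤ, (q ^ 2) ^ (z.1 ^ 2 + z.1) * (q ^ 2) ^ (z.2 ^ 2) := by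
    rw [psi, theta3]; exact tsum_mul_tsum_of_summable_norm hP' h3'
  have e2 : theta3 (q ^ 2) * psi (q ^ 2)
      = ∑' z : ℤ × ℤ, (q ^ 2) ^ (z.1 ^ 2) * (q ^ 2) ^ (z.2 ^ 2 + z.2) := by
    rw [psi, theta3]; exact tsum_mul_tsum_of_summable_norm h3' hP'
  rw [e0, split_sum _ ((hP.mul_norm hP).of_norm)]
  have part1 : (∑' p : ℤ × ℤ, q ^ ((p.1 + p.2) ^ 2 + (p.1 + p.2))
      * q ^ ((p.1 - p.2) ^ 2 + (p.1 - p.2)))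
      = psi (q ^ 2) * theta3 (q ^ 2) := by
    rw [e1]
    apply tsum_congr
    intro p
    rw [← zpow_add₀ hq0,
      expand hq0 _ 0 (p.1 ^ 2 + p.1) (p.2 ^ 2) (by ring), zpow_zero, one_mul]
  have part2 : (∑' p : ℤ × ℤ, q ^ ((p.1 + p.2 + 1) ^ 2 + (p.1 + p.2 + 1))
      * q ^ ((p.1 - p.2) ^ 2 + (p.1 - p.2)))
      = theta3 (q ^ 2) * psi (q ^ 2) := by
    have key : ∀ p : ℤ × ℤ, q ^ ((p.1 + p.2 + 1) ^ 2 + (p.1 + p.2 + 1))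
        * q ^ ((p.1 - p.2) ^ 2 + (p.1 - p.2))
        = (q ^ 2) ^ ((p.1 + 1) ^ 2) * (q ^ 2) ^ (p.2 ^ 2 + p.2) := by
      intro p
      rw [← zpow_add₀ hq0,
        expand hq0 _ 0 ((p.1 + 1) ^ 2) (p.2 ^ 2 + p.2) (by ring), zpow_zero, one_mul]
    rw [tsum_congr key]
    have shift : (∑' p : ℤ × ℤ, (q ^ 2) ^ ((p.1 + 1) ^ 2) * (q ^ 2) ^ (p.2 ^ 2 + p.2))
        = ∑' p : ℤ × ℤ, (q ^ 2) ^ (p.1 ^ 2) * (q ^ 2) ^ (p.2 ^ 2 + p.2) :=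
      (Equiv.prodCongr (Equiv.addRight (1 : ℤ)) (Equiv.refl ℤ)).tsum_eq
        (fun p : ℤ × ℤ => (q ^ 2) ^ (p.1 ^ 2) * (q ^ 2) ^ (p.2 ^ 2 + p.2))
    rw [shift, e2]
  rw [part1, part2]
  ring

/-- (D): θ₂(q) = q^{1/4}·ψ(q). -/
lemma identD (hq0 : q ≠ 0) : theta2 q = q ^ (1/4 : ℂ) * psi q := by
  rw [theta2, psi, ← tsum_mul_left]
  apply tsum_congr
  intro n
  have hexp : ((((n : ℂ) + 1 / 2) ^ 2) : ℂ) = ((n ^ 2 + n : ℤ) : ℂ) + 1/4 := by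
    push_cast; ring
  rw [hexp, cpow_add _ _ hq0, cpow_intCast]
  ring

/-- (E): (q^{1/4})⁴ = q. -/
lemma identE (hq0 : q ≠ 0) : (q ^ (1/4 : ℂ)) ^ (4 : ℕ) = q := by
  rw [cpow_def_of_ne_zero hq0, ← Complex.exp_nat_mul]
  have h : ((4 : ℕ) : ℂ) * (Complex.log q * (1/4)) = Complex.log q := by
    push_cast; ring
  rw [h, Complex.exp_log hq0]

end Main

end JacobiAux

/-- Jacobi's quartic identity: θ₃⁴ = θ₄⁴ + θ₂⁴ for |q| < 1. -/
theorem jacobi_quartic (q : ℂ) (hq : ‖q‖ < 1) :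
    theta3 q ^ 4 = theta4 q ^ 4 + theta2 q ^ 4 := by
  rcases eq_or_ne q 0 with rfl | hq0
  · -- q = 0 : θ₃ = θ₄ = 1, θ₂ = 0
    have h3 : theta3 (0 : ℂ) = 1 := by
      rw [theta3, tsum_eq_single (0 : ℤ) (fun n hn => zero_zpow _ (by
        simpa using pow_ne_zero 2 hn))]
      norm_num
    have h4 : theta4 (0 : ℂ) = 1 := by
      rw [theta4, tsum_eq_single (0 : ℤ) (fun n hn => by
        rw [zero_zpow _ (by simpa using pow_ne_zero 2 hn), mul_zero])]
      norm_num
    have h2 : theta2 (0 : ℂ) = 0 := by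
      rw [theta2]
      have hz : ∀ n : ℤ, (0 : ℂ) ^ ((((n : ℂ) + 1 / 2) ^ 2) : ℂ) = 0 := by
        intro n
        apply zero_cpow
        apply pow_ne_zero
        intro h
        have h2 : ((2 * n + 1 : ℤ) : ℂ) = 0 := by
          push_cast
          linear_combination 2 * h
        rw [Int.cast_eq_zero] at h2
        omega
      rw [tsum_congr hz, tsum_zero]
    rw [h3, h4, h2]; norm_num
  · -- q ≠ 0 : the real work
    have hA := JacobiAux.identA hq0 hq
    have hB := JacobiAux.identB hq0 hq
    have hC := JacobiAux.identC hq0 hq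
    have hD := JacobiAux.identD hq0
    have hE := JacobiAux.identE hq0
    have h2 : theta2 q ^ 4 = q * JacobiAux.psi q ^ 4 := by
      calc theta2 q ^ 4 = (q ^ (1/4 : ℂ)) ^ (4:ℕ) * JacobiAux.psi q ^ 4 := by
            rw [hD]; ring
        _ = q * JacobiAux.psi q ^ 4 := by rw [hE]
    have h34 : theta3 q ^ 4 - theta4 q ^ 4 = q * JacobiAux.psi q ^ 4 := by
      have e3 : theta3 q ^ 4 = (theta3 q * theta3 q) ^ 2 := by ring
      have e4 : theta4 q ^ 4 = (theta4 q * theta4 q) ^ 2 := by ring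
      have eψ : q * JacobiAux.psi q ^ 4 = q * (JacobiAux.psi q * JacobiAux.psi q) ^ 2 := by
        ring
      rw [e3, e4, eψ, hA, hB, hC]
      ring
    rw [h2]
    linear_combination h34
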